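/- Let X be a compactum (a compact perfect metric space with more than one point), let n ≥ 2 be an integer, and let f : X → X be a continuous map. Then F_n(f) is fully exact if and only if SF_n(f) is fully exact; moreover, if F_n(f) is fully exact, then f is fully exact. -/

import Mathlib

open Metric Set TopologicalSpace

variable (X : Type*) [MetricSpace X] (n : ℕ)

/-- The `n`-fold symmetric product `F_n(X)`: nonempty subsets of `X` with at most `n`
points, as a subspace of the nonempty compact subsets of `X` with the Hausdorff metric. -/
abbrev Fn := {A : NonemptyCompacts X // (A : Set X).Finite ∧ (A : Set X).ncard ≤ n}

/-- The induced map `F_n(f)` on the `n`-fold symmetric product, `A ↦ f(A)`. -/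
noncomputable def FnMap (f : X → X) : Fn X n → Fn X n := fun A =>
  ⟨⟨⟨f '' (A.1 : Set X), (A.2.1.image f).isCompact⟩, A.1.nonempty.image f⟩,
    A.2.1.image f, le_trans (Set.ncard_image_le A.2.1) A.2.2⟩

/-- `F_1(X) ⊆ F_n(X)`: the set of singletons. -/
def F1 : Set (Fn X n) := {A | ∃ x : X, (A.1 : Set X) = {x}}

/-- The setoid collapsing `F_1(X)` to a point. -/
def SFnSetoid : Setoid (Fn X n) where
  r A B := A = B ∨ (A ∈ F1 X n ∧ B ∈ F1 X n)
  iseqv := by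
    refine ⟨fun _ => Or.inl rfl, fun h => h.imp Eq.symm And.symm, fun h₁ h₂ => ?_⟩
    rcases h₁ with rfl | h₁
    · exact h₂
    · rcases h₂ with rfl | h₂
      · exact Or.inr h₁
      · exact Or.inr ⟨h₁.1, h₂.2⟩

/-- The `n`-fold symmetric product suspension `SF_n(X) = F_n(X)/F_1(X)`,
with the quotient topology. -/
abbrev SFn := Quotient (SFnSetoid X n)

/-- The quotient map `q : F_n(X) → SF_n(X)`. -/
def SFnQ : Fn X n → SFn X n := Quotient.mk (SFnSetoid X n)

/-- The induced map `SF_n(f)` on the suspension, with `SF_n(f) ∘ q = q ∘ F_n(f)`. -/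
noncomputable def SFnMap (f : X → X) : SFn X n → SFn X n :=
  Quotient.lift (fun A => SFnQ X n (FnMap X n f A))
    (fun A B h => Quotient.sound (by
      rcases h with rfl | ⟨⟨x, hx⟩, ⟨y, hy⟩⟩
      · exact Or.inl rfl
      · exact Or.inr ⟨⟨f x, by simp [FnMap, hx]⟩, ⟨f y, by simp [FnMap, hy]⟩⟩))

/-- The metric `ρ` on `SF_n(X)`:
`ρ(χ₁,χ₂) = H(F_1(X) ∪ q⁻¹(χ₁), F_1(X) ∪ q⁻¹(χ₂))` where `H` is the Hausdorff
distance between subsets of `F_n(X)`. -/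
noncomputable def SFnDist : SFn X n → SFn X n → ℝ := fun a b =>
  Metric.hausdorffDist (F1 X n ∪ SFnQ X n ⁻¹' {a}) (F1 X n ∪ SFnQ X n ⁻¹' {b})

/-- `g` is fully exact: for all nonempty open `U, V` there is `k` with
`int(g^k(U) ∩ g^k(V)) ≠ ∅`. -/
def FullyExact {Z : Type*} [TopologicalSpace Z] (g : Z → Z) : Prop :=
  ∀ U V : Set Z, IsOpen U → IsOpen V → U.Nonempty → V.Nonempty →
    ∃ k : ℕ, 0 < k ∧ (interior (g^[k] '' U ∩ g^[k] '' V)).Nonempty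


section Helpers

variable {X : Type*} [MetricSpace X] {n : ℕ}

lemma fn_dist_eq (A B : Fn X n) :
    dist A B = Metric.hausdorffDist (A.1 : Set X) (B.1 : Set X) := rfl

lemma fn_edist_ne_top (A B : Fn X n) :
    EMetric.hausdorffEdist (A.1 : Set X) (B.1 : Set X) ≠ ⊤ :=
  Metric.hausdorffEdist_ne_top_of_nonempty_of_bounded A.1.nonempty B.1.nonempty
    A.1.isCompact.isBounded B.1.isCompact.isBounded

lemma isClosed_F1 : IsClosed (F1 X n) := by
  rw [← isOpen_compl_iff, Metric.isOpen_iff]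
  intro A hA
  obtain ⟨x, hx⟩ := A.1.nonempty
  have hxy : ∃ y ∈ (A.1 : Set X), y ≠ x := by
    by_contra h
    push_neg at h
    exact hA ⟨x, Set.eq_singleton_iff_unique_mem.2 ⟨hx, h⟩⟩
  obtain ⟨y, hy, hyx⟩ := hxy
  have hd : 0 < dist y x := dist_pos.2 hyx
  refine ⟨dist y x / 3, by positivity, ?_⟩
  intro B hB hBF1
  rw [Metric.mem_ball, fn_dist_eq] at hB
  obtain ⟨x', hx'B, hxx'⟩ :=
    Metric.exists_dist_lt_of_hausdorffDist_lt' hx hB (fn_edist_ne_top B A)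
  obtain ⟨y', hy'B, hyy'⟩ :=
    Metric.exists_dist_lt_of_hausdorffDist_lt' hy hB (fn_edist_ne_top B A)
  obtain ⟨z, hz⟩ := hBF1
  rw [hz, Set.mem_singleton_iff] at hx'B hy'B
  have hxy' : x' = y' := hx'B.trans hy'B.symm
  have h1 : dist y x ≤ dist y y' + dist y' x := dist_triangle y y' x
  have h2 : dist y y' = dist y' y := dist_comm y y'
  have h3 : dist y' x = dist x' x := by rw [hxy']
  linarith

/-- Any nonempty open subset of `F_n(X)` contains a non-singleton element,
provided `X` is perfect and `n ≥ 2`. -/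
lemma exists_mem_diff_F1 (hX : Perfect (Set.univ : Set X)) (hn : 2 ≤ n)
    {W : Set (Fn X n)} (hW : IsOpen W) (hne : W.Nonempty) : (W \ F1 X n).Nonempty := by
  obtain ⟨A, hA⟩ := hne
  by_cases hA1 : A ∈ F1 X n
  · obtain ⟨x, hx⟩ := hA1
    obtain ⟨ε, hε, hball⟩ := Metric.isOpen_iff.1 hW A hA
    have hacc := accPt_iff_nhds.1 (hX.acc x (Set.mem_univ x))
    obtain ⟨y, ⟨hyb, -⟩, hyx⟩ := hacc (Metric.ball x ε) (Metric.ball_mem_nhds x hε)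
    set S : Set X := {x, y} with hS
    have hSfin : S.Finite := (Set.finite_singleton y).insert x
    have hScard : S.ncard ≤ n := by
      rw [hS]
      have h1 := Set.ncard_insert_le x ({y} : Set X)
      rw [Set.ncard_singleton] at h1
      omega
    refine ⟨⟨⟨⟨S, hSfin.isCompact⟩, ⟨x, Set.mem_insert x {y}⟩⟩, hSfin, hScard⟩, hball ?_, ?_⟩
    · rw [Metric.mem_ball, fn_dist_eq]
      have hle : Metric.hausdorffDist S (A.1 : Set X) ≤ dist y x := by
        rw [hx]
        refine Metric.hausdorffDist_le_of_mem_dist dist_nonneg ?_ ?_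
        · intro p hp
          rcases Set.mem_insert_iff.1 hp with rfl | hp
          · exact ⟨p, Set.mem_singleton p, by simp [dist_nonneg]⟩
          · rw [Set.mem_singleton_iff] at hp
            subst hp
            exact ⟨x, Set.mem_singleton x, le_refl _⟩
        · intro q hq
          rw [Set.mem_singleton_iff] at hq
          subst hq
          exact ⟨q, Set.mem_insert q {y}, by simp [dist_nonneg]⟩
      have hyd : dist y x < ε := Metric.mem_ball.1 hyb
      exact lt_of_le_of_lt hle hyd
    · rintro ⟨z, hz⟩
      simp only at hz
      have hxz : x ∈ ({z} : Set X) := hz ▸ Set.mem_insert x {y}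
      have hyz : y ∈ ({z} : Set X) := hz ▸ Set.mem_insert_of_mem x rfl
      exact hyx (hyz.trans hxz.symm)
  · exact ⟨A, hA, hA1⟩

lemma isOpen_q_image {S : Set (Fn X n)} (hS : IsOpen S) (hdisj : ∀ A ∈ S, A ∉ F1 X n) :
    IsOpen (SFnQ X n '' S) := by
  have hpre : SFnQ X n ⁻¹' (SFnQ X n '' S) = S := by
    ext A
    constructor
    · rintro ⟨B, hB, hq⟩
      have hr : B = A ∨ (B ∈ F1 X n ∧ A ∈ F1 X n) := Quotient.exact hq
      rcases hr with rfl | ⟨hB1, -⟩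
      · exact hB
      · exact absurd hB1 (hdisj B hB)
    · exact fun h => Set.mem_image_of_mem _ h
  have : IsOpen (SFnQ X n ⁻¹' (SFnQ X n '' S)) := by rw [hpre]; exact hS
  exact isOpen_coinduced.2 this

lemma q_surjective : Function.Surjective (SFnQ X n) := fun b => Quot.exists_rep b

lemma q_continuous : Continuous (SFnQ X n) := continuous_quot_mk

lemma sfnMap_q (f : X → X) (A : Fn X n) :
    SFnMap X n f (SFnQ X n A) = SFnQ X n (FnMap X n f A) := rfl

lemma q_iterate (f : X → X) (k : ℕ) (A : Fn X n) :
    (SFnMap X n f)^[k] (SFnQ X n A) = SFnQ X n ((FnMap X n f)^[k] A) := by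
  induction k with
  | zero => rfl
  | succ k ih =>
      rw [Function.iterate_succ_apply', Function.iterate_succ_apply', ih, sfnMap_q]

lemma fnMap_iterate_coe (f : X → X) (k : ℕ) (A : Fn X n) :
    (((FnMap X n f)^[k] A).1 : Set X) = f^[k] '' (A.1 : Set X) := by
  induction k with
  | zero => simp
  | succ k ih =>
      rw [Function.iterate_succ_apply']
      show f '' (((FnMap X n f)^[k] A).1 : Set X) = _
      rw [ih, Function.iterate_succ', Set.image_comp]

lemma isOpen_fn_subsets {U : Set X} (hU : IsOpen U) :
    IsOpen {A : Fn X n | (A.1 : Set X) ⊆ U} := by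
  rw [Metric.isOpen_iff]
  intro A hA
  obtain ⟨r, hr, hthick⟩ := A.1.isCompact.exists_thickening_subset_open hU hA
  refine ⟨r, hr, fun B hB => ?_⟩
  rw [Metric.mem_ball, fn_dist_eq] at hB
  intro z hz
  obtain ⟨w, hw, hzw⟩ :=
    Metric.exists_dist_lt_of_hausdorffDist_lt hz hB (fn_edist_ne_top B A)
  exact hthick (Metric.mem_thickening_iff.2 ⟨w, hw, hzw⟩)

/-- The singleton element of `F_n(X)`. -/
noncomputable def fnSing (hn : 1 ≤ n) (x : X) : Fn X n :=
  ⟨⟨⟨{x}, isCompact_singleton⟩, Set.singleton_nonempty x⟩, Set.finite_singleton x,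
    by simpa [Set.ncard_singleton] using hn⟩

end Helpers

theorem stmt18 (X : Type*) [MetricSpace X] [CompactSpace X] [Nontrivial X]
    (hX : Perfect (Set.univ : Set X))
    (n : ℕ) (hn : 2 ≤ n) (f : X → X) (hf : Continuous f) :
    (FullyExact (FnMap X n f) ↔ FullyExact (SFnMap X n f)) ∧
    (FullyExact (FnMap X n f) → FullyExact f) := by
  have hsurj : Function.Surjective (SFnQ X n) := q_surjective
  have hq : Continuous (SFnQ X n) := q_continuous
  have forward : FullyExact (FnMap X n f) → FullyExact (SFnMap X n f) := by
    intro hFE U V hU hV hUne hVne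
    obtain ⟨k, hk, hI⟩ := hFE _ _ (hU.preimage hq) (hV.preimage hq)
      (hUne.preimage hsurj) (hVne.preimage hsurj)
    obtain ⟨B, hBI, hBF⟩ := exists_mem_diff_F1 hX hn isOpen_interior hI
    refine ⟨k, hk, SFnQ X n B, ?_⟩
    set I := interior ((FnMap X n f)^[k] '' (SFnQ X n ⁻¹' U) ∩
      (FnMap X n f)^[k] '' (SFnQ X n ⁻¹' V)) with hIdef
    have hopen : IsOpen (SFnQ X n '' (I \ F1 X n)) :=
      isOpen_q_image (isOpen_interior.sdiff isClosed_F1) (fun A hA => hA.2)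
    have hsub : SFnQ X n '' (I \ F1 X n) ⊆
        (SFnMap X n f)^[k] '' U ∩ (SFnMap X n f)^[k] '' V := by
      rintro _ ⟨C, ⟨hCI, -⟩, rfl⟩
      obtain ⟨⟨D, hD, hDC⟩, ⟨E, hE, hEC⟩⟩ := interior_subset hCI
      refine ⟨⟨SFnQ X n D, hD, ?_⟩, ⟨SFnQ X n E, hE, ?_⟩⟩
      · rw [q_iterate, hDC]
      · rw [q_iterate, hEC]
    exact interior_maximal hsub hopen (Set.mem_image_of_mem _ ⟨hBI, hBF⟩)
  have backward : FullyExact (SFnMap X n f) → FullyExact (FnMap X n f) := by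
    intro hFE U V hU hV hUne hVne
    have hUo : IsOpen (U \ F1 X n) := hU.sdiff isClosed_F1
    have hVo : IsOpen (V \ F1 X n) := hV.sdiff isClosed_F1
    have hUn := exists_mem_diff_F1 hX hn hU hUne
    have hVn := exists_mem_diff_F1 hX hn hV hVne
    obtain ⟨k, hk, hO⟩ := hFE _ _ (isOpen_q_image hUo (fun A hA => hA.2))
      (isOpen_q_image hVo (fun A hA => hA.2)) (hUn.image _) (hVn.image _)
    have hpre : IsOpen (SFnQ X n ⁻¹'
        (interior ((SFnMap X n f)^[k] '' (SFnQ X n '' (U \ F1 X n)) ∩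
          (SFnMap X n f)^[k] '' (SFnQ X n '' (V \ F1 X n))))) :=
      isOpen_interior.preimage hq
    obtain ⟨C, hCO, hCF⟩ := exists_mem_diff_F1 hX hn hpre (hO.preimage hsurj)
    refine ⟨k, hk, C, ?_⟩
    have hsub : (SFnQ X n ⁻¹'
        (interior ((SFnMap X n f)^[k] '' (SFnQ X n '' (U \ F1 X n)) ∩
          (SFnMap X n f)^[k] '' (SFnQ X n '' (V \ F1 X n))))) \ F1 X n ⊆
        (FnMap X n f)^[k] '' U ∩ (FnMap X n f)^[k] '' V := by
      rintro D ⟨hDO, hDF⟩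
      obtain ⟨h1, h2⟩ := interior_subset (Set.mem_preimage.1 hDO)
      constructor
      · obtain ⟨χ, hχ, hχD⟩ := h1
        obtain ⟨E, hE, rfl⟩ := hχ
        rw [q_iterate] at hχD
        have hr : (FnMap X n f)^[k] E = D ∨
            ((FnMap X n f)^[k] E ∈ F1 X n ∧ D ∈ F1 X n) := Quotient.exact hχD
        rcases hr with heq | ⟨-, hD1⟩
        · exact ⟨E, hE.1, heq⟩
        · exact absurd hD1 hDF
      · obtain ⟨χ, hχ, hχD⟩ := h2
        obtain ⟨E, hE, rfl⟩ := hχ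
        rw [q_iterate] at hχD
        have hr : (FnMap X n f)^[k] E = D ∨
            ((FnMap X n f)^[k] E ∈ F1 X n ∧ D ∈ F1 X n) := Quotient.exact hχD
        rcases hr with heq | ⟨-, hD1⟩
        · exact ⟨E, hE.1, heq⟩
        · exact absurd hD1 hDF
    exact interior_maximal hsub (hpre.sdiff isClosed_F1) ⟨hCO, hCF⟩
  have part2 : FullyExact (FnMap X n f) → FullyExact f := by
    intro hFE U V hU hV hUne hVne
    obtain ⟨x, hx⟩ := hUne
    obtain ⟨y, hy⟩ := hVne
    have h1n : 1 ≤ n := by omega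
    have hUn : ({A : Fn X n | (A.1 : Set X) ⊆ U}).Nonempty :=
      ⟨fnSing h1n x, Set.singleton_subset_iff.2 hx⟩
    have hVn : ({A : Fn X n | (A.1 : Set X) ⊆ V}).Nonempty :=
      ⟨fnSing h1n y, Set.singleton_subset_iff.2 hy⟩
    obtain ⟨k, hk, A, hA⟩ := hFE _ _ (isOpen_fn_subsets hU) (isOpen_fn_subsets hV) hUn hVn
    obtain ⟨ε, hε, hball⟩ := Metric.isOpen_iff.1 isOpen_interior A hA
    obtain ⟨a, ha⟩ := A.1.nonempty
    refine ⟨k, hk, ?_⟩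
    have hsub : Metric.ball a ε ⊆ f^[k] '' U ∩ f^[k] '' V := by
      intro z hz
      set S : Set X := insert z ((A.1 : Set X) \ {a}) with hS
      have hSfin : S.Finite := (A.2.1.diff : ((A.1 : Set X) \ {a}).Finite).insert z
      have hScard : S.ncard ≤ n := by
        have h1 : S.ncard ≤ ((A.1 : Set X) \ {a}).ncard + 1 := Set.ncard_insert_le z _
        have h2 : ((A.1 : Set X) \ {a}).ncard + 1 = ((A.1 : Set X)).ncard :=
          Set.ncard_diff_singleton_add_one ha A.2.1
        have h3 := A.2.2
        omega
      set Az : Fn X n := ⟨⟨⟨S, hSfin.isCompact⟩, ⟨z, Set.mem_insert z _⟩⟩, hSfin, hScard⟩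
        with hAzdef
      have hd : dist Az A < ε := by
        rw [fn_dist_eq]
        have hle : Metric.hausdorffDist (Az.1 : Set X) (A.1 : Set X) ≤ dist z a := by
          refine Metric.hausdorffDist_le_of_mem_dist dist_nonneg ?_ ?_
          · intro p hp
            rcases Set.mem_insert_iff.1 hp with rfl | hp
            · exact ⟨a, ha, le_refl _⟩
            · exact ⟨p, hp.1, by simp [dist_nonneg]⟩
          · intro q hq
            by_cases hqa : q = a
            · subst hqa
              exact ⟨z, Set.mem_insert z _, le_of_eq (dist_comm q z)⟩
            · exact ⟨q, Set.mem_insert_of_mem z ⟨hq, hqa⟩, by simp [dist_nonneg]⟩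
        exact lt_of_le_of_lt hle (Metric.mem_ball.1 hz)
      obtain ⟨⟨B, hB, hBA⟩, ⟨C, hC, hCA⟩⟩ := interior_subset (hball (Metric.mem_ball.2 hd))
      have hzB : z ∈ f^[k] '' (B.1 : Set X) := by
        rw [← fnMap_iterate_coe, hBA]
        exact Set.mem_insert z _
      have hzC : z ∈ f^[k] '' (C.1 : Set X) := by
        rw [← fnMap_iterate_coe, hCA]
        exact Set.mem_insert z _
      exact ⟨Set.image_mono hB hzB, Set.image_mono hC hzC⟩
    exact ⟨a, interior_maximal hsub Metric.isOpen_ball (Metric.mem_ball_self hε)⟩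
  exact ⟨⟨forward, backward⟩, part2⟩
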